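/- Let G be a locally compact Hausdorff topological group with a bi-invariant Haar measure μ, and let A ⊆ G be open, precompact, and non-empty with μ(A⁻¹·A) ≤ (2−ε)μ(A) for some ε > 0. Then for every x ∈ A·A⁻¹, one has μ(A ∩ x·A) ≥ ε·μ(A). -/

import Mathlib

open scoped Pointwise ENNReal
open MeasureTheory

theorem gap_bound_continuous {G : Type*} [Group G] [TopologicalSpace G]
    [IsTopologicalGroup G] [LocallyCompactSpace G] [T2Space G]
    [MeasurableSpace G] [BorelSpace G]
    (μ : MeasureTheory.Measure G) [μ.IsHaarMeasure] [μ.IsMulRightInvariant]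
    (A : Set G) (hopen : IsOpen A) (hpre : IsCompact (closure A)) (hne : A.Nonempty)
    (ε : ℝ) (hε : 0 < ε)
    (hdoub : μ (A⁻¹ * A) ≤ ENNReal.ofReal (2 - ε) * μ A) :
    ∀ x ∈ A * A⁻¹, ENNReal.ofReal ε * μ A ≤ μ (A ∩ x • A) := by
  rintro x hx
  rw [Set.mem_mul] at hx
  obtain ⟨a, ha, c, hc, rfl⟩ := hx
  rw [Set.mem_inv] at hc
  set b := c⁻¹ with hb
  have hbA : b ∈ A := hc
  have hx2 : a * c = a * b⁻¹ := by simp [hb]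
  have hApos : 0 < μ A := hopen.measure_pos μ hne
  have hAfin : μ A < ⊤ :=
    lt_of_le_of_lt (measure_mono subset_closure) hpre.measure_lt_top
  have hμu : μ (a⁻¹ • A) = μ A := measure_smul μ a⁻¹ A
  have hμv : μ (b⁻¹ • A) = μ A := measure_smul μ b⁻¹ A
  set u := a⁻¹ • A with hu
  set v := b⁻¹ • A with hv
  have hkey : μ (A ∩ (a * c) • A) = μ (u ∩ v) := by
    have : a⁻¹ • (A ∩ (a * c) • A) = u ∩ v := by
      rw [Set.smul_set_inter, smul_smul]
      congr 1
      rw [hv, hb]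
      congr 1
      simp [mul_assoc]
    rw [← this, measure_smul]
  have hsub : u ∪ v ⊆ A⁻¹ * A := by
    rintro y (hy | hy) <;> obtain ⟨z, hz, rfl⟩ := hy
    · exact Set.mul_mem_mul (Set.inv_mem_inv.mpr ha) hz
    · exact Set.mul_mem_mul (Set.inv_mem_inv.mpr hbA) hz
  have hie : μ (u ∪ v) + μ (u ∩ v) = μ u + μ v :=
    measure_union_add_inter u ((hopen.smul b⁻¹).measurableSet)
  -- case ε > 2
  rcases le_or_gt ε 2 with hε2 | hε2
  · set e := ENNReal.ofReal ε with he
    have he2 : e ≤ 2 := by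
      rw [he]
      calc ENNReal.ofReal ε ≤ ENNReal.ofReal 2 := ENNReal.ofReal_le_ofReal hε2
        _ = 2 := by norm_num
    have hofsub : ENNReal.ofReal (2 - ε) = 2 - e := by
      rw [he, ← ENNReal.ofReal_ofNat 2, ← ENNReal.ofReal_sub _ hε.le]
    have h2fin : (2 : ℝ≥0∞) * μ A ≠ ⊤ := ENNReal.mul_ne_top (by norm_num) hAfin.ne
    have heμ : e * μ A ≤ 2 * μ A := mul_le_mul_left he2 _
    have h1 : 2 * μ A ≤ 2 * μ A - e * μ A + μ (u ∩ v) := by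
      calc 2 * μ A = μ u + μ v := by rw [hμu, hμv, two_mul]
        _ = μ (u ∪ v) + μ (u ∩ v) := hie.symm
        _ ≤ ENNReal.ofReal (2 - ε) * μ A + μ (u ∩ v) := by
            gcongr
            exact le_trans (measure_mono hsub) hdoub
        _ = (2 - e) * μ A + μ (u ∩ v) := by rw [hofsub]
        _ = 2 * μ A - e * μ A + μ (u ∩ v) := by
            rw [ENNReal.sub_mul (fun _ _ => hAfin.ne)]
    have h2 : 2 * μ A + e * μ A ≤ 2 * μ A + μ (u ∩ v) := by
      calc 2 * μ A + e * μ A ≤ (2 * μ A - e * μ A + μ (u ∩ v)) + e * μ A :=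
            add_le_add_left h1 _
        _ = (2 * μ A - e * μ A + e * μ A) + μ (u ∩ v) := by ring
        _ = 2 * μ A + μ (u ∩ v) := by rw [tsub_add_cancel_of_le heμ]
    have := (ENNReal.add_le_add_iff_left h2fin).mp h2
    rw [hkey]
    exact this
  · exfalso
    have h0 : ENNReal.ofReal (2 - ε) = 0 := by
      rw [ENNReal.ofReal_eq_zero]; linarith
    have : μ (A⁻¹ * A) = 0 := le_antisymm (by simpa [h0] using hdoub) (zero_le)
    have : μ u = 0 := le_antisymm (this ▸ measure_mono (fun y hy => hsub (Or.inl hy))) (zero_le)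
    rw [hμu] at this
    exact hApos.ne' this
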